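/- If the Equal-cardinality-Partition-reduction instance admits an AEF-1 allocation in which each agent receives exactly k+2 items, then there exists Y ⊆ {1, …, 2k} with |Y| = k and Σ_{j∈Y} x_j = T (equivalently, the multiset {x_1, …, x_{2k}} admits an equal-cardinality equal-sum partition). -/

import Mathlib

open Finset

/-- Average value of a bundle: total value divided by cardinality; `0` for the empty bundle. -/
noncomputable def avgVal {G : Type*} (v : G → ℝ) (S : Finset G) : ℝ :=
  (∑ g ∈ S, v g) / (S.card : ℝ)

/-- The item type of the Equal-cardinality-Partition-reduction instance:
`2k` items of `M₁`, `k+1` items of `M₂`, and five zero-valued items of `M₃`. -/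
abbrev ECP (k : ℕ) := Fin (2 * k) ⊕ (Fin (k + 1) ⊕ Fin 5)

/-- The identical valuation of the Equal-cardinality-Partition-reduction instance:
`v(g_j) = x_j + k²T²`, each item of `M₂` has value `(k+2)T'/(k+1)²` where
`T' = T + k³T²`, and the items of `M₃` have value `0`. -/
noncomputable def ecpVal (k T : ℕ) (x : Fin (2 * k) → ℕ) : ECP k → ℝ
  | Sum.inl j => (x j : ℝ) + (k : ℝ) ^ 2 * (T : ℝ) ^ 2
  | Sum.inr (Sum.inl _) =>
      ((k : ℝ) + 2) * ((T : ℝ) + (k : ℝ) ^ 3 * (T : ℝ) ^ 2) / ((k : ℝ) + 1) ^ 2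
  | Sum.inr (Sum.inr _) => 0

/-- The five zero-valued items of `M₃`, as a subset of all items. -/
def zeroItems (k : ℕ) : Finset (ECP k) :=
  Finset.univ.image (fun z : Fin 5 => Sum.inr (Sum.inr z))

/-- The `k+1` items of `M₂`, as a subset of all items. -/
def midItems (k : ℕ) : Finset (ECP k) :=
  Finset.univ.image (fun b : Fin (k + 1) => Sum.inr (Sum.inl b))

/-- `A` is an allocation among three agents: pairwise disjoint bundles covering all items. -/
def IsAlloc3 (k : ℕ) (A : Fin 3 → Finset (ECP k)) : Prop :=
  (∀ i j : Fin 3, i ≠ j → Disjoint (A i) (A j)) ∧ Finset.univ.biUnion A = Finset.univ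

/-- AEF-1 for three agents with the identical valuation `v`: for every pair of agents
there is an item in the union of the two bundles whose removal eliminates the envy. -/
def AEF1id (k : ℕ) (v : ECP k → ℝ) (A : Fin 3 → Finset (ECP k)) : Prop :=
  ∀ i h : Fin 3,
    ∃ g ∈ A i ∪ A h, avgVal v ((A h).erase g) ≤ avgVal v ((A i).erase g)
lemma ecp_split {k : ℕ} {M : Type*} [AddCommMonoid M] (S : Finset (ECP k)) (w : ECP k → M) :
    ∑ g ∈ S, w g =
      (∑ j ∈ Finset.univ.filter (fun j => Sum.inl j ∈ S), w (Sum.inl j)) +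
      ((∑ b ∈ Finset.univ.filter (fun b : Fin (k+1) => Sum.inr (Sum.inl b) ∈ S), w (Sum.inr (Sum.inl b))) +
       ∑ z ∈ Finset.univ.filter (fun z : Fin 5 => Sum.inr (Sum.inr z) ∈ S), w (Sum.inr (Sum.inr z))) := by
  have h0 : ∑ g ∈ S, w g = ∑ g : ECP k, if g ∈ S then w g else 0 := by
    rw [Finset.sum_ite_mem, Finset.univ_inter]
  rw [h0, Fintype.sum_sum_type, Fintype.sum_sum_type,
    Finset.sum_filter, Finset.sum_filter, Finset.sum_filter]


lemma ecp_base {K Tr : ℝ} (hK : 4 ≤ K) (hT : 4 ≤ Tr) : (K+2)*Tr ≤ K^2*Tr^2 := by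
  nlinarith [mul_nonneg (by linarith : (0:ℝ) ≤ K-2) (by linarith : (0:ℝ) ≤ K+1),
    mul_nonneg (by linarith : (0:ℝ) ≤ Tr-1) (sq_nonneg K),
    mul_nonneg (by linarith : (0:ℝ) ≤ Tr-4) (by nlinarith [sq_nonneg K] : (0:ℝ) ≤ K^2),
    mul_nonneg (mul_nonneg (by linarith : (0:ℝ) ≤ Tr-1) (by linarith : (0:ℝ) ≤ K-2)) (by linarith : (0:ℝ) ≤ K+1)]

lemma ecp_D0 {K Tr P c : ℝ} (hK : 4 ≤ K) (hT : 4 ≤ Tr)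
    (hPD : (K+1)^2*(P-c) = K^2*Tr^2-(K+2)*Tr) : 0 ≤ P - c := by
  have h1 : (0:ℝ) ≤ (K+1)^2 * (P - c) := by rw [hPD]; nlinarith [ecp_base hK hT]
  nlinarith [h1, mul_pos (by linarith : (0:ℝ) < K+1) (by linarith : (0:ℝ) < K+1)]

/-- Refute disjunct O1 when `(K+1)*nh - (K+2)*ni ≥ K`. -/
lemma ecp_O1 {K Tr P D Xi Xh gv ni nh bi bh : ℝ}
    (hK : 4 ≤ K) (hT : 4 ≤ Tr) (hP : P = K^2*Tr^2)
    (hD : (K+1)^2*D = K^2*Tr^2 - (K+2)*Tr) (hD0 : 0 ≤ D)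
    (hXi : Xi ≤ 2*Tr) (hXh0 : 0 ≤ Xh)
    (hbi : 0 ≤ bi) (hbh : bh ≤ K+1)
    (hnh0 : 0 ≤ nh)
    (hco : K ≤ (K+1)*nh - (K+2)*ni) (hgv : 0 ≤ gv)
    (hmain : (K+1)*(Xh + nh*P - bh*D) ≤ (K+2)*(Xi + ni*P - bi*D - gv)) : False := by
  have hP0 : (0:ℝ) ≤ P := by rw [hP]; positivity
  nlinarith [mul_nonneg (by linarith : (0:ℝ) ≤ K+1-bh) hD0,
    mul_nonneg hbi hD0,
    mul_nonneg (by linarith : (0:ℝ) ≤ (K+1)*nh - (K+2)*ni - K) hP0,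
    mul_nonneg (by linarith : (0:ℝ) ≤ K-4) hP0,
    ecp_base hK hT, mul_nonneg (by linarith : (0:ℝ) ≤ K-2) hP0,
    mul_nonneg (mul_nonneg (by linarith : (0:ℝ) ≤ K-1) (by positivity : (0:ℝ) ≤ K^2))
      (by nlinarith : (0:ℝ) ≤ Tr^2)]

/-- Refute disjunct O2 when `(K+2)*(nh-1) - (K+1)*ni ≥ K`. -/
lemma ecp_O2 {K Tr P D Xi Xh gv ni nh bi bh : ℝ}
    (hK : 4 ≤ K) (hT : 4 ≤ Tr) (hP : P = K^2*Tr^2)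
    (hD : (K+1)^2*D = K^2*Tr^2 - (K+2)*Tr) (hD0 : 0 ≤ D)
    (hXi : Xi ≤ 2*Tr) (hXh0 : 0 ≤ Xh)
    (hbi : 0 ≤ bi) (hbh : bh ≤ K+1)
    (hco : K ≤ (K+2)*(nh-1) - (K+1)*ni)
    (hgv : gv ≤ P + 2*Tr)
    (hmain : (K+2)*(Xh + nh*P - bh*D - gv) ≤ (K+1)*(Xi + ni*P - bi*D)) : False := by
  have hP0 : (0:ℝ) ≤ P := by rw [hP]; positivity
  have hk1 : (0:ℝ) ≤ K+1 := by linarith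
  have hk2 : (0:ℝ) ≤ K+2 := by linarith
  have hmain2 := mul_le_mul_of_nonneg_left hmain hk1
  have hD2 : (K+2)*((K+1)^2*D) = (K+2)*(K^2*Tr^2 - (K+2)*Tr) := by rw [hD]
  have hT2 : (0:ℝ) ≤ Tr^2 := sq_nonneg Tr
  nlinarith [hmain2, hD2,
    mul_nonneg (mul_nonneg (mul_nonneg hk1 hk2) (by linarith : (0:ℝ) ≤ K+1-bh)) hD0,
    mul_nonneg (mul_nonneg (mul_nonneg hk1 hk1) hbi) hD0,
    mul_nonneg (mul_nonneg hk1 (by linarith : (0:ℝ) ≤ (K+2)*(nh-1) - (K+1)*ni - K)) hP0,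
    mul_nonneg (mul_nonneg hk1 hk2) (by linarith : (0:ℝ) ≤ P + 2*Tr - gv),
    mul_nonneg (mul_nonneg hk1 hk2) hXh0,
    mul_nonneg (mul_nonneg hk1 hk1) (by linarith : (0:ℝ) ≤ 2*Tr - Xi),
    ecp_base hK hT,
    mul_nonneg (mul_nonneg (by linarith : (0:ℝ) ≤ K-2) (by positivity : (0:ℝ) ≤ K^2)) hT2,
    mul_nonneg (mul_nonneg (mul_nonneg (by linarith : (0:ℝ) ≤ K-2) (by linarith : (0:ℝ) ≤ K+1)) (by positivity : (0:ℝ) ≤ K^2)) hT2,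
    mul_nonneg (mul_nonneg (by linarith : (0:ℝ) ≤ Tr-4) (by positivity : (0:ℝ) ≤ K^2)) (by linarith : (0:ℝ) ≤ Tr),
    mul_nonneg (mul_nonneg (mul_nonneg (by linarith : (0:ℝ) ≤ Tr-4) (by linarith : (0:ℝ) ≤ K)) (by positivity : (0:ℝ) ≤ K^2)) (by linarith : (0:ℝ) ≤ Tr)]

/-- Refute disjunct O1 for the pair (q, p) when agent p holds at most `K` mid items. -/
lemma ecp_B1 {K Tr P D Xi Xh gv bi bh : ℝ}
    (hK : 4 ≤ K) (hT : 4 ≤ Tr) (hP : P = K^2*Tr^2)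
    (hD : (K+1)^2*D = K^2*Tr^2 - (K+2)*Tr) (hD0 : 0 ≤ D)
    (hXi : Xi ≤ 2*Tr) (hXh0 : 0 ≤ Xh)
    (hbi : 0 ≤ bi) (hbh : bh ≤ K) (hgv : 0 ≤ gv)
    (hmain : (K+1)*(Xh + (K+1)*P - bh*D) ≤ (K+2)*(Xi + K*P - bi*D - gv)) : False := by
  have hP0 : (0:ℝ) ≤ P := by rw [hP]; positivity
  have hk1 : (0:ℝ) ≤ K+1 := by linarith
  have hk2 : (0:ℝ) ≤ K+2 := by linarith
  have hmain2 := mul_le_mul_of_nonneg_left hmain hk1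
  have hD2 : K*((K+1)^2*D) = K*(K^2*Tr^2 - (K+2)*Tr) := by rw [hD]
  nlinarith [hmain2, hD2,
    mul_nonneg (mul_nonneg (mul_nonneg hk1 hk1) (by linarith : (0:ℝ) ≤ K-bh)) hD0,
    mul_nonneg (mul_nonneg (mul_nonneg hk1 hk2) hbi) hD0,
    mul_nonneg (mul_nonneg hk1 hk2) hgv,
    mul_nonneg (mul_nonneg hk1 hk1) hXh0,
    mul_nonneg (mul_nonneg hk1 hk2) (by linarith : (0:ℝ) ≤ 2*Tr - Xi),
    ecp_base hK hT,
    mul_nonneg (mul_nonneg (by linarith : (0:ℝ) ≤ Tr-4) (by positivity : (0:ℝ) ≤ K^2)) (by linarith : (0:ℝ) ≤ Tr),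
    mul_nonneg (mul_nonneg (by linarith : (0:ℝ) ≤ K-2) (by linarith : (0:ℝ) ≤ 3*K+2)) (by nlinarith : (0:ℝ) ≤ Tr)]

/-- From disjunct O1 against the all-mid bundle, the other agent's `M₁` share is at least `T`. -/
lemma ecp_final {K Tr c Xq gv : ℝ} (hK : 4 ≤ K) (hT : 4 ≤ Tr)
    (hcid : (K+1)^2*c = (K+2)*(Tr + K^3*Tr^2)) (hgv : 0 ≤ gv)
    (hmain : (K+1)*((K+1)*c) ≤ (K+2)*(Xq + K*(K^2*Tr^2) - gv)) : Tr ≤ Xq := by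
  nlinarith [hmain, hcid, mul_nonneg (by linarith : (0:ℝ) ≤ K+2) hgv]

set_option maxHeartbeats 2000000

/-- If the Equal-cardinality-Partition-reduction instance admits an AEF-1 allocation in
which every agent receives exactly `k+2` items, then the multiset `{x_1, …, x_{2k}}`
admits an equal-cardinality equal-sum partition. -/
theorem ecp_backward (k T : ℕ) (hk : 4 ≤ k) (hT : 4 ≤ T)
    (x : Fin (2 * k) → ℕ) (hsum : ∑ j, x j = 2 * T)
    (hex : ∃ A : Fin 3 → Finset (ECP k),
      IsAlloc3 k A ∧ AEF1id k (ecpVal k T x) A ∧ ∀ i, (A i).card = k + 2) :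
    ∃ Y : Finset (Fin (2 * k)), Y.card = k ∧ ∑ j ∈ Y, x j = T := by
  obtain ⟨A, ⟨hdisj, hcover⟩, haef, hcard⟩ := hex
  set v : ECP k → ℝ := ecpVal k T x with hv
  set K : ℝ := (k : ℝ) with hK
  set Tr : ℝ := (T : ℝ) with hTr
  have hK4 : (4:ℝ) ≤ K := by rw [hK]; exact_mod_cast hk
  have hT4 : (4:ℝ) ≤ Tr := by rw [hTr]; exact_mod_cast hT
  set P : ℝ := K^2 * Tr^2 with hP
  set c : ℝ := (K + 2) * (Tr + K^3 * Tr^2) / (K+1)^2 with hc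
  -- index sets
  set Y : Fin 3 → Finset (Fin (2*k)) := fun i => Finset.univ.filter (fun j => Sum.inl j ∈ A i) with hYdef
  set B : Fin 3 → Finset (Fin (k+1)) := fun i => Finset.univ.filter (fun b => (Sum.inr (Sum.inl b) : ECP k) ∈ A i) with hBdef
  have hmem : ∀ g : ECP k, ∃ i, g ∈ A i := by
    intro g
    have : g ∈ Finset.univ.biUnion A := by rw [hcover]; exact mem_univ g
    simpa using this
  -- partition sums
  have hYdisj : ∀ i j : Fin 3, i ≠ j → Disjoint (Y i) (Y j) := by
    intro i j hij
    rw [Finset.disjoint_left]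
    intro a hai haj
    simp only [hYdef, mem_filter] at hai haj
    exact (Finset.disjoint_left.mp (hdisj i j hij)) hai.2 haj.2
  have hBdisj : ∀ i j : Fin 3, i ≠ j → Disjoint (B i) (B j) := by
    intro i j hij
    rw [Finset.disjoint_left]
    intro a hai haj
    simp only [hBdef, mem_filter] at hai haj
    exact (Finset.disjoint_left.mp (hdisj i j hij)) hai.2 haj.2
  have hYcover : Finset.univ.biUnion Y = Finset.univ := by
    apply Finset.eq_univ_of_forall
    intro j
    obtain ⟨i, hi⟩ := hmem (Sum.inl j)
    exact Finset.mem_biUnion.mpr ⟨i, mem_univ i, Finset.mem_filter.mpr ⟨mem_univ _, hi⟩⟩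
  have hBcover : Finset.univ.biUnion B = Finset.univ := by
    apply Finset.eq_univ_of_forall
    intro b
    obtain ⟨i, hi⟩ := hmem (Sum.inr (Sum.inl b))
    exact Finset.mem_biUnion.mpr ⟨i, mem_univ i, Finset.mem_filter.mpr ⟨mem_univ _, hi⟩⟩
  have hsumY : ∀ {M : Type} [AddCommMonoid M] (f : Fin (2*k) → M),
      ∑ i : Fin 3, ∑ j ∈ Y i, f j = ∑ j, f j := by
    intro M _ f
    rw [show (Finset.univ : Finset (Fin (2*k))) = Finset.univ.biUnion Y from hYcover.symm]
    exact (Finset.sum_biUnion (fun i _ j _ hij => hYdisj i j hij)).symm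
  have hsumB : ∑ i : Fin 3, (B i).card = k + 1 := by
    have := Finset.card_biUnion (s := (Finset.univ : Finset (Fin 3))) (t := B)
      (fun i _ j _ hij => hBdisj i j hij)
    rw [hBcover] at this
    simpa using this.symm
  have hYtot : ∑ i : Fin 3, (Y i).card = 2 * k := by
    have h := hsumY (fun _ => (1:ℕ))
    simp only [← Finset.card_eq_sum_ones, Finset.card_univ, Fintype.card_fin] at h
    exact h
  -- value decomposition
  set Sv : Fin 3 → ℝ := fun i => ∑ g ∈ A i, v g with hSv
  set X : Fin 3 → ℝ := fun i => ∑ j ∈ Y i, (x j : ℝ) with hX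
  have e1 : ∀ i, Finset.univ.filter (fun j => Sum.inl j ∈ A i) = Y i := fun i => by rw [hYdef]
  have e2 : ∀ i, Finset.univ.filter (fun b : Fin (k+1) => (Sum.inr (Sum.inl b) : ECP k) ∈ A i) = B i :=
    fun i => by rw [hBdef]
  have hS : ∀ i, Sv i = X i + ((Y i).card : ℝ) * P + ((B i).card : ℝ) * c := by
    intro i
    have h := ecp_split (A i) v
    rw [e1, e2] at h
    simp only [show ∀ j, v (Sum.inl j) = (x j:ℝ) + P from fun _ => rfl,
      show ∀ b : Fin (k+1), v (Sum.inr (Sum.inl b)) = c from fun _ => rfl,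
      show ∀ z : Fin 5, v (Sum.inr (Sum.inr z)) = 0 from fun _ => rfl,
      Finset.sum_add_distrib, Finset.sum_const, nsmul_eq_mul, Finset.sum_const_zero, add_zero] at h
    simp only [hSv, hX]
    rw [h]
    ring
  -- per-bundle cardinality
  have hn : ∀ i, (Y i).card + (B i).card ≤ k + 2 := by
    intro i
    have h := ecp_split (A i) (fun _ => (1:ℕ))
    rw [e1, e2] at h
    simp only [Finset.sum_const, smul_eq_mul, mul_one] at h
    rw [hcard i] at h
    omega
  -- positivity and bound facts
  have hK0 : (0:ℝ) ≤ K := by rw [hK]; positivity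
  have hT0 : (0:ℝ) ≤ Tr := by rw [hTr]; positivity
  have hk1 : (0:ℝ) < K + 1 := by nlinarith
  have hk2 : (0:ℝ) < K + 2 := by nlinarith
  have hc0 : (0:ℝ) ≤ c := by
    rw [hc]
    apply div_nonneg _ (by positivity)
    have h5 : (0:ℝ) ≤ K^3*Tr^2 := mul_nonneg (pow_nonneg hK0 3) (sq_nonneg Tr)
    nlinarith
  have hPD : (K+1)^2 * (P - c) = K^2*Tr^2 - (K+2)*Tr := by
    rw [hc, hP]
    field_simp
    ring
  have hD0 : (0:ℝ) ≤ P - c := ecp_D0 hK4 hT4 hPD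
  have hxle : ∀ j, x j ≤ 2 * T := by
    intro j
    rw [← hsum]
    exact Finset.single_le_sum (fun _ _ => Nat.zero_le _) (mem_univ j)
  have hv0 : ∀ g, 0 ≤ v g := by
    intro g
    match g with
    | Sum.inl j => show (0:ℝ) ≤ (x j:ℝ) + K^2*Tr^2; positivity
    | Sum.inr (Sum.inl b) => exact hc0
    | Sum.inr (Sum.inr z) => exact le_refl 0
  have hvU : ∀ g, v g ≤ P + 2*Tr := by
    intro g
    match g with
    | Sum.inl j =>
      show (x j:ℝ) + K^2*Tr^2 ≤ P + 2*Tr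
      have : (x j : ℝ) ≤ 2*Tr := by
        rw [hTr]; exact_mod_cast hxle j
      rw [hP]; linarith
    | Sum.inr (Sum.inl b) => show c ≤ P + 2*Tr; linarith
    | Sum.inr (Sum.inr z) => show (0:ℝ) ≤ P + 2*Tr; rw [hP]; nlinarith
  have hX0 : ∀ i, 0 ≤ X i := by
    intro i; rw [hX]
    exact Finset.sum_nonneg (fun j _ => by positivity)
  have hxsR : ∑ j, (x j:ℝ) = 2*Tr := by
    rw [hTr]; exact_mod_cast congrArg (Nat.cast : ℕ → ℝ) hsum
  have hXle : ∀ i, X i ≤ 2*Tr := by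
    intro i
    rw [← hxsR, hX]
    exact Finset.sum_le_sum_of_subset_of_nonneg (Finset.subset_univ _) (fun j _ _ => by positivity)
  have hXtot : ∑ i : Fin 3, X i = 2*Tr := by
    rw [← hxsR, hX]
    exact hsumY (fun j => (x j : ℝ))
  -- AEF-1 extraction
  have haef' : ∀ i h : Fin 3, i ≠ h →
      (∃ gv : ℝ, 0 ≤ gv ∧ gv ≤ P + 2*Tr ∧ (K+1) * Sv h ≤ (K+2) * (Sv i - gv)) ∨
      (∃ gv : ℝ, 0 ≤ gv ∧ gv ≤ P + 2*Tr ∧ (K+2) * (Sv h - gv) ≤ (K+1) * Sv i) := by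
    intro i h hih
    obtain ⟨g, hg, hle⟩ := haef i h
    have hdisj' := hdisj i h hih
    have hcast2 : ((k+2 : ℕ) : ℝ) = K + 2 := by rw [hK]; push_cast; ring
    rcases Finset.mem_union.mp hg with hgi | hgh
    · left
      have hgnh : g ∉ A h := Finset.disjoint_left.mp hdisj' hgi
      refine ⟨v g, hv0 g, hvU g, ?_⟩
      rw [Finset.erase_eq_of_notMem hgnh] at hle
      have hsumerase : ∑ g' ∈ (A i).erase g, v g' = Sv i - v g := by
        have h2 := Finset.sum_erase_add (A i) v hgi
        rw [hSv]; simp only; linarith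
      have hcarde : (((A i).erase g).card : ℝ) = K + 1 := by
        rw [Finset.card_erase_of_mem hgi, hcard i, hK]; push_cast; ring
      unfold avgVal at hle
      rw [hsumerase, hcarde, hcard h, hcast2] at hle
      rw [div_le_div_iff₀ hk2 hk1] at hle
      have : ∑ g' ∈ A h, v g' = Sv h := by rw [hSv]
      rw [this] at hle
      linarith
    · right
      have hgni : g ∉ A i := Finset.disjoint_right.mp hdisj' hgh
      refine ⟨v g, hv0 g, hvU g, ?_⟩
      rw [Finset.erase_eq_of_notMem hgni] at hle
      have hsumerase : ∑ g' ∈ (A h).erase g, v g' = Sv h - v g := by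
        have h2 := Finset.sum_erase_add (A h) v hgh
        rw [hSv]; simp only; linarith
      have hcarde : (((A h).erase g).card : ℝ) = K + 1 := by
        rw [Finset.card_erase_of_mem hgh, hcard h, hK]; push_cast; ring
      unfold avgVal at hle
      rw [hsumerase, hcarde, hcard i, hcast2] at hle
      rw [div_le_div_iff₀ hk1 hk2] at hle
      have : ∑ g' ∈ A i, v g' = Sv i := by rw [hSv]
      rw [this] at hle
      linarith
  -- mid-item identity
  have hcid : (K+1)^2*c = (K+2)*(Tr + K^3*Tr^2) := by
    rw [hc]; field_simp
  -- counts per agent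
  set nn : Fin 3 → ℕ := fun i => (Y i).card + (B i).card with hnndef
  have hB3 : (B 0).card + (B 1).card + (B 2).card = k + 1 := by
    rw [Fin.sum_univ_three] at hsumB; exact hsumB
  have hY3 : (Y 0).card + (Y 1).card + (Y 2).card = 2 * k := by
    rw [Fin.sum_univ_three] at hYtot; exact hYtot
  have hnle : ∀ i, nn i ≤ k + 2 := fun i => hn i
  have hBle : ∀ i, (B i).card ≤ k + 1 := fun i =>
    le_trans (Finset.single_le_sum (f := fun i => (B i).card)
      (fun _ _ => Nat.zero_le _) (mem_univ i)) (le_of_eq hsumB)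
  -- cast equalities for decomposition
  have hSform : ∀ i, Sv i = X i + ((nn i : ℕ) : ℝ)*P - ((B i).card : ℝ)*(P - c) := by
    intro i
    rw [hS i]
    have : ((nn i : ℕ) : ℝ) = ((Y i).card : ℝ) + ((B i).card : ℝ) := by
      simp only [hnndef]; push_cast; ring
    rw [this]; ring
  -- Step A: sizes are balanced
  have hstepA : ∀ i h : Fin 3, i ≠ h → nn h ≤ nn i + 1 := by
    intro i h hih
    by_contra hgapn
    have hgap : nn i + 2 ≤ nn h := by omega
    have hgapR : ((nn i : ℕ) : ℝ) + 2 ≤ ((nn h : ℕ) : ℝ) := by exact_mod_cast hgap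
    have hniR : ((nn i : ℕ) : ℝ) ≤ K + 2 := by
      rw [hK]; exact_mod_cast hnle i
    have hbhR : ((B h).card : ℝ) ≤ K + 1 := by
      rw [hK]; exact_mod_cast hBle h
    have hbiR : (0:ℝ) ≤ ((B i).card : ℝ) := Nat.cast_nonneg _
    have hnh0 : (0:ℝ) ≤ ((nn h : ℕ) : ℝ) := Nat.cast_nonneg _
    rcases haef' i h hih with ⟨gv, hgv0, hgvU, hm⟩ | ⟨gv, hgv0, hgvU, hm⟩
    · rw [hSform h, hSform i] at hm
      have hco : K ≤ (K+1)*((nn h : ℕ) : ℝ) - (K+2)*((nn i : ℕ) : ℝ) := by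
        nlinarith [mul_nonneg (by linarith : (0:ℝ) ≤ K+1)
          (by linarith : (0:ℝ) ≤ ((nn h : ℕ) : ℝ) - ((nn i : ℕ) : ℝ) - 2)]
      exact ecp_O1 hK4 hT4 hP hPD hD0 (hXle i) (hX0 h) hbiR hbhR hnh0 hco hgv0 hm
    · rw [hSform h, hSform i] at hm
      have hco : K ≤ (K+2)*(((nn h : ℕ) : ℝ)-1) - (K+1)*((nn i : ℕ) : ℝ) := by
        nlinarith [mul_nonneg (by linarith : (0:ℝ) ≤ K+2)
          (by linarith : (0:ℝ) ≤ ((nn h : ℕ) : ℝ) - ((nn i : ℕ) : ℝ) - 2)]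
      exact ecp_O2 hK4 hT4 hP hPD hD0 (hXle i) (hX0 h) hbiR hbhR hco hgvU hm
  -- determine the multiset of sizes
  have hn3 : nn 0 + nn 1 + nn 2 = 3*k + 1 := by
    simp only [hnndef]; omega
  have hcases : (nn 0 = k+1 ∧ nn 1 = k ∧ nn 2 = k) ∨ (nn 1 = k+1 ∧ nn 0 = k ∧ nn 2 = k) ∨
      (nn 2 = k+1 ∧ nn 0 = k ∧ nn 1 = k) := by
    have h01 := hstepA 0 1 (by decide)
    have h10 := hstepA 1 0 (by decide)
    have h02 := hstepA 0 2 (by decide)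
    have h20 := hstepA 2 0 (by decide)
    have h12 := hstepA 1 2 (by decide)
    have h21 := hstepA 2 1 (by decide)
    omega
  -- the main claim, for a generic labelling of the agents
  have claim : ∀ p q r : Fin 3, p ≠ q → p ≠ r → q ≠ r →
      nn p = k+1 → nn q = k → nn r = k →
      ∃ Y' : Finset (Fin (2 * k)), Y'.card = k ∧ ∑ j ∈ Y', x j = T := by
    intro p q r hpq hpr hqr hnp hnq hnr
    have hUniv : ({p, q, r} : Finset (Fin 3)) = Finset.univ := by
      apply Finset.eq_univ_of_card
      rw [Finset.card_insert_of_notMem (by simp [hpq, hpr]),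
        Finset.card_insert_of_notMem (by simp [hqr]), Finset.card_singleton]
      simp
    have hsum3 : ∀ {M : Type} [AddCommMonoid M] (f : Fin 3 → M),
        f p + f q + f r = ∑ i, f i := by
      intro M _ f
      rw [← hUniv, Finset.sum_insert (by simp [hpq, hpr]),
        Finset.sum_insert (by simp [hqr]), Finset.sum_singleton, add_assoc]
    -- the O1 disjunct must hold against agent p, for both q and r
    have hO1 : ∀ s : Fin 3, s ≠ p → nn s = k →
        ∃ gv : ℝ, 0 ≤ gv ∧ (K+1) * Sv p ≤ (K+2) * (Sv s - gv) := by
      intro s hsp hns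
      have hbpR : ((B p).card : ℝ) ≤ K + 1 := by
        rw [hK]; exact_mod_cast hBle p
      rcases haef' s p hsp with ⟨gv, hgv0, hgvU, hm⟩ | ⟨gv, hgv0, hgvU, hm⟩
      · exact ⟨gv, hgv0, hm⟩
      · exfalso
        rw [hSform p, hSform s] at hm
        have hnpR : ((nn p : ℕ) : ℝ) = K + 1 := by rw [hK, hnp]; push_cast; ring
        have hnsR : ((nn s : ℕ) : ℝ) = K := by rw [hK, hns]
        have hco : K ≤ (K+2)*(((nn p : ℕ) : ℝ)-1) - (K+1)*((nn s : ℕ) : ℝ) := by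
          rw [hnpR, hnsR]; ring_nf; nlinarith
        exact ecp_O2 hK4 hT4 hP hPD hD0 (hXle s) (hX0 p)
          (Nat.cast_nonneg _) hbpR hco hgvU hm
    -- agent p must hold all k+1 mid items
    have hbp : (B p).card = k + 1 := by
      by_contra hne
      have hbple : (B p).card ≤ k := by
        have : (B p).card ≤ nn p := by simp only [hnndef]; omega
        omega
      obtain ⟨gv, hgv0, hm⟩ := hO1 q (fun h => hpq h.symm) hnq
      rw [hSform p, hSform q] at hm
      have hnpR : ((nn p : ℕ) : ℝ) = K + 1 := by rw [hK, hnp]; push_cast; ring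
      have hnqR : ((nn q : ℕ) : ℝ) = K := by rw [hK, hnq]
      rw [hnpR, hnqR] at hm
      have hbpR : ((B p).card : ℝ) ≤ K := by rw [hK]; exact_mod_cast hbple
      exact ecp_B1 hK4 hT4 hP hPD hD0 (hXle q) (hX0 p) (Nat.cast_nonneg _) hbpR hgv0 hm
    -- hence q and r hold no mid items, and p holds no M₁ items
    have hBqr : (B q).card = 0 ∧ (B r).card = 0 := by
      have h4 := hsum3 (fun i => (B i).card)
      rw [hsumB] at h4
      omega
    have hYp : (Y p).card = 0 := by
      have : nn p = (Y p).card + (B p).card := by simp only [hnndef]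
      omega
    have hYq : (Y q).card = k := by
      have : nn q = (Y q).card + (B q).card := by simp only [hnndef]
      omega
    have hXp : X p = 0 := by
      rw [hX]
      simp only
      rw [Finset.card_eq_zero.mp hYp, Finset.sum_empty]
    have hXqr : X p + X q + X r = 2*Tr := by
      rw [hsum3 X, hXtot]
    -- value of p's and q's, r's bundles
    have hSvp : Sv p = (K+1)*c := by
      rw [hS p, hXp, Finset.card_eq_zero.mp hYp, hbp]
      rw [hK]; push_cast; simp
    have hXT : ∀ s : Fin 3, s ≠ p → nn s = k → (B s).card = 0 → Tr ≤ X s := by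
      intro s hsp hns hbs
      obtain ⟨gv, hgv0, hm⟩ := hO1 s hsp hns
      have hSvs : Sv s = X s + K*(K^2*Tr^2) := by
        rw [hS s, hbs]
        have hYs : (Y s).card = k := by
          have : nn s = (Y s).card + (B s).card := by simp only [hnndef]
          omega
        rw [hYs, hP, hK]; push_cast; ring
      rw [hSvp, hSvs] at hm
      exact ecp_final hK4 hT4 hcid hgv0 hm
    have hXq : Tr ≤ X q := hXT q (fun h => hpq h.symm) hnq hBqr.1
    have hXr : Tr ≤ X r := hXT r (fun h => hpr h.symm) hnr hBqr.2
    have hXqT : X q = Tr := by linarith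
    refine ⟨Y q, hYq, ?_⟩
    have : ((∑ j ∈ Y q, x j : ℕ) : ℝ) = (T : ℝ) := by
      push_cast
      rw [← hTr, ← hXqT, hX]
    exact_mod_cast this
  rcases hcases with ⟨h1, h2, h3⟩ | ⟨h1, h2, h3⟩ | ⟨h1, h2, h3⟩
  · exact claim 0 1 2 (by decide) (by decide) (by decide) h1 h2 h3
  · exact claim 1 0 2 (by decide) (by decide) (by decide) h1 h2 h3
  · exact claim 2 0 1 (by decide) (by decide) (by decide) h1 h2 h3
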